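/- Let G be a finite simple graph with at least one edge. Then max{ j − i : there is a self disjoint set in G consisting of i edges whose union has j vertices } = max{ j − i : there is a self semi-disjoint set in G consisting of i edges whose union has j vertices } = max{ j : there is a strongly disjoint set of bouquets of G consisting of j bouquets } (that is, d'_{1,G} = d'_{2,G} = d'_G). -/

import Mathlib

variable {V : Type*} [DecidableEq V] [Fintype V]

/-- The union of a family of edges. -/
def unionEdges (M : Finset (Finset V)) : Finset V := M.biUnion id

/-- `E` is the edge set of a simple hypergraph: every edge has at least two
vertices and no edge is contained in another distinct edge. -/
def IsSimpleHypergraph (E : Finset (Finset V)) : Prop :=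
  (∀ S ∈ E, 2 ≤ S.card) ∧ ∀ S ∈ E, ∀ T ∈ E, S ⊆ T → S = T

/-- A family `M` of edges of `E` is a semi-induced matching if no edge of `E`
outside `M` is contained in the union of the members of `M`. -/
def IsSemiInducedMatching (E M : Finset (Finset V)) : Prop :=
  M ⊆ E ∧ ∀ S ∈ E, S ∉ M → ¬ S ⊆ unionEdges M

/-- An induced matching is a semi-induced matching whose edges are pairwise disjoint. -/
def IsInducedMatching (E M : Finset (Finset V)) : Prop :=
  IsSemiInducedMatching E M ∧ ∀ S ∈ M, ∀ T ∈ M, S ≠ T → Disjoint S T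

/-- A self semi-induced matching is a semi-induced matching in which no member
is contained in the union of the other members. -/
def IsSelfSemiInducedMatching (E M : Finset (Finset V)) : Prop :=
  IsSemiInducedMatching E M ∧ ∀ S ∈ M, ¬ S ⊆ unionEdges (M.erase S)

/-- A self-contained semi-induced matching. -/
def IsSelfContainedSemiInducedMatching (E M : Finset (Finset V)) : Prop :=
  M ⊆ E ∧
  (∀ S ∈ E, S ∉ M → ¬ S ⊆ unionEdges M ∨ ∃ T ∈ M, T ⊆ S ∪ unionEdges (M.erase T)) ∧
  ∀ S ∈ M, ¬ S ⊆ unionEdges (M.erase S)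

/-- A self disjoint set of edges. -/
def IsSelfDisjointSet (E M : Finset (Finset V)) : Prop :=
  M ⊆ E ∧ (∀ S ∈ M, ¬ S ⊆ unionEdges (M.erase S)) ∧
  ∃ M₀ ⊆ M, IsInducedMatching E M₀ ∧
    ∀ S ∈ M, S ∉ M₀ → ∃ T ∈ M₀, (S \ T).card = 1

/-- A self semi-disjoint set of edges. -/
def IsSelfSemiDisjointSet (E M : Finset (Finset V)) : Prop :=
  M ⊆ E ∧ (∀ S ∈ M, ¬ S ⊆ unionEdges (M.erase S)) ∧
  ∃ M₀ ⊆ M, IsSemiInducedMatching E M₀ ∧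
    ∀ S ∈ M, S ∉ M₀ → ∃ T ∈ M₀, (S \ T).card = 1

/-- A bouquet of the (2-uniform) graph with edge set `E`, given by its root `b.1`
and its nonempty set of flowers `b.2`; its stems must be edges of `E`. -/
def IsBouquet (E : Finset (Finset V)) (b : V × Finset V) : Prop :=
  b.2.Nonempty ∧ b.1 ∉ b.2 ∧ ∀ y ∈ b.2, ({b.1, y} : Finset V) ∈ E

/-- The vertex set of a bouquet. -/
def bouquetVerts (b : V × Finset V) : Finset V := insert b.1 b.2

/-- The set of stems of a bouquet. -/
def stems (b : V × Finset V) : Finset (Finset V) :=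
  b.2.image fun y => ({b.1, y} : Finset V)

/-- A strongly disjoint set of bouquets: the vertex sets of the bouquets are
pairwise disjoint and one can choose one stem from each bouquet such that the
chosen stems form an induced matching. -/
def IsStronglyDisjointBouquets (E : Finset (Finset V)) (B : Finset (V × Finset V)) : Prop :=
  (∀ b ∈ B, IsBouquet E b) ∧
  (∀ b ∈ B, ∀ b' ∈ B, b ≠ b' → Disjoint (bouquetVerts b) (bouquetVerts b')) ∧
  ∃ f : V × Finset V → V, (∀ b ∈ B, f b ∈ b.2) ∧
    IsInducedMatching E (B.image fun b => ({b.1, f b} : Finset V))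

section Aux

variable {V : Type*} [DecidableEq V] [Fintype V]

lemma mem_unionEdges {M : Finset (Finset V)} {v : V} :
    v ∈ unionEdges M ↔ ∃ S ∈ M, v ∈ S := by simp [unionEdges]

lemma unionEdges_mono {M N : Finset (Finset V)} (h : M ⊆ N) :
    unionEdges M ⊆ unionEdges N := by
  intro v hv
  rw [mem_unionEdges] at hv ⊢
  obtain ⟨S, hS, hvS⟩ := hv
  exact ⟨S, h hS, hvS⟩

lemma inducedMatching_empty (E : Finset (Finset V)) (h2 : ∀ S ∈ E, S.card = 2) :
    IsInducedMatching E (∅ : Finset (Finset V)) := by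
  refine ⟨⟨Finset.empty_subset _, fun S hS _ hsub => ?_⟩, by simp⟩
  have hU : unionEdges (∅ : Finset (Finset V)) = ∅ := by simp [unionEdges]
  rw [hU, Finset.subset_empty] at hsub
  have := h2 S hS
  rw [hsub] at this
  simp at this

set_option maxHeartbeats 1000000 in
lemma bouquets_to_selfDisjoint (E : Finset (Finset V)) (B : Finset (V × Finset V))
    (hB : IsStronglyDisjointBouquets E B) :
    ∃ M, IsSelfDisjointSet E M ∧ (unionEdges M).card - M.card = B.card := by
  obtain ⟨hbq, hdisj, f, hf1, hf2⟩ := hB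
  set M : Finset (Finset V) := B.biUnion stems with hMdef
  have hmemM : ∀ S, S ∈ M ↔ ∃ b ∈ B, ∃ y ∈ b.2, S = ({b.1, y} : Finset V) := by
    intro S
    simp [hMdef, stems, Finset.mem_biUnion, Finset.mem_image, eq_comm]
  have hstem_verts : ∀ (b : V × Finset V), ∀ y ∈ b.2,
      ({b.1, y} : Finset V) ⊆ bouquetVerts b := by
    intro b y hy v hv
    rcases Finset.mem_insert.mp hv with h | h
    · rw [h]; exact Finset.mem_insert_self _ _
    · rw [Finset.mem_singleton.mp h]; exact Finset.mem_insert_of_mem hy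
  -- M ⊆ E
  have hME : M ⊆ E := by
    intro S hS
    obtain ⟨b, hb, y, hy, rfl⟩ := (hmemM S).mp hS
    exact (hbq b hb).2.2 y hy
  -- private vertex condition
  have hpriv : ∀ S ∈ M, ¬ S ⊆ unionEdges (M.erase S) := by
    intro S hS hsub
    obtain ⟨b, hb, y, hy, rfl⟩ := (hmemM _).mp hS
    have hyU := hsub (Finset.mem_insert_of_mem (Finset.mem_singleton_self y))
    rw [mem_unionEdges] at hyU
    obtain ⟨S', hS', hyS'⟩ := hyU
    have hS'ne := (Finset.mem_erase.mp hS').1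
    have hS'M := (Finset.mem_erase.mp hS').2
    obtain ⟨b', hb', y', hy', rfl⟩ := (hmemM _).mp hS'M
    by_cases hbb : b' = b
    · subst hbb
      rcases Finset.mem_insert.mp hyS' with h | h
      · exact (hbq b' hb).2.1 (h ▸ hy)
      · exact hS'ne (by rw [Finset.mem_singleton.mp h])
    · have h1 : y ∈ bouquetVerts b := Finset.mem_insert_of_mem hy
      have h2 : y ∈ bouquetVerts b' := hstem_verts b' y' hy' hyS'
      exact (Finset.disjoint_left.mp (hdisj b' hb' b hb hbb) h2) h1
  refine ⟨M, ⟨hME, hpriv, B.image (fun b => ({b.1, f b} : Finset V)), ?_, hf2, ?_⟩, ?_⟩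
  · -- M₀ ⊆ M
    intro S hS
    obtain ⟨b, hb, rfl⟩ := Finset.mem_image.mp hS
    exact (hmemM _).mpr ⟨b, hb, f b, hf1 b hb, rfl⟩
  · -- attachment condition
    intro S hS hSM₀
    obtain ⟨b, hb, y, hy, rfl⟩ := (hmemM _).mp hS
    refine ⟨{b.1, f b}, Finset.mem_image_of_mem _ hb, ?_⟩
    have hy1 : y ≠ b.1 := fun h => (hbq b hb).2.1 (h ▸ hy)
    have hyfb : y ≠ f b := by
      intro h
      exact hSM₀ (by rw [h]; exact Finset.mem_image_of_mem _ hb)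
    have hsd : ({b.1, y} : Finset V) \ {b.1, f b} = {y} := by
      ext v
      simp only [Finset.mem_sdiff, Finset.mem_insert, Finset.mem_singleton]
      constructor
      · rintro ⟨h1 | h1, h3⟩
        · exact absurd (Or.inl h1) h3
        · exact h1
      · rintro rfl
        exact ⟨Or.inr rfl, by rintro (h | h); exacts [hy1 h, hyfb h]⟩
    rw [hsd, Finset.card_singleton]
  · -- cardinality count
    have hstems_disj : ∀ b ∈ B, ∀ b' ∈ B, b ≠ b' → Disjoint (stems b) (stems b') := by
      intro b hb b' hb' hne'
      rw [Finset.disjoint_left]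
      intro S hSb hSb'
      obtain ⟨y, hy, rfl⟩ := Finset.mem_image.mp hSb
      have h1 : b.1 ∈ bouquetVerts b := Finset.mem_insert_self _ _
      have h2 : b.1 ∈ bouquetVerts b' := by
        obtain ⟨y', hy', hEq⟩ := Finset.mem_image.mp hSb'
        exact hstem_verts b' y' hy' (hEq ▸ Finset.mem_insert_self _ _)
      exact (Finset.disjoint_left.mp (hdisj b hb b' hb' hne') h1) h2
    have hstems_card : ∀ b ∈ B, (stems b).card = b.2.card := by
      intro b hb
      apply Finset.card_image_of_injOn
      intro y hy y' hy' h
      have hpair : ({b.1, y} : Finset V) = {b.1, y'} := h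
      have : y ∈ ({b.1, y'} : Finset V) := by
        rw [← hpair]; exact Finset.mem_insert_of_mem (Finset.mem_singleton_self y)
      rcases Finset.mem_insert.mp this with h' | h'
      · exact absurd (h' ▸ hy) (hbq b hb).2.1
      · exact Finset.mem_singleton.mp h'
    have hMcard : M.card = ∑ b ∈ B, b.2.card := by
      rw [hMdef, Finset.card_biUnion hstems_disj]
      exact Finset.sum_congr rfl hstems_card
    have hUM : unionEdges M = B.biUnion bouquetVerts := by
      ext v
      rw [mem_unionEdges]
      constructor
      · rintro ⟨S, hS, hv⟩
        obtain ⟨b, hb, y, hy, rfl⟩ := (hmemM _).mp hS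
        exact Finset.mem_biUnion.mpr ⟨b, hb, hstem_verts b y hy hv⟩
      · intro hv
        obtain ⟨b, hb, hvb⟩ := Finset.mem_biUnion.mp hv
        rcases Finset.mem_insert.mp hvb with h | h
        · obtain ⟨y, hy⟩ := (hbq b hb).1
          exact ⟨{b.1, y}, (hmemM _).mpr ⟨b, hb, y, hy, rfl⟩,
            h ▸ Finset.mem_insert_self _ _⟩
        · exact ⟨{b.1, v}, (hmemM _).mpr ⟨b, hb, v, h, rfl⟩,
            Finset.mem_insert_of_mem (Finset.mem_singleton_self v)⟩
    have hUcard : (unionEdges M).card = ∑ b ∈ B, (b.2.card + 1) := by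
      rw [hUM, Finset.card_biUnion hdisj]
      refine Finset.sum_congr rfl fun b hb => ?_
      rw [bouquetVerts, Finset.card_insert_of_notMem (hbq b hb).2.1]
    have hsum : ∑ b ∈ B, (b.2.card + 1) = (∑ b ∈ B, b.2.card) + B.card := by
      rw [Finset.sum_add_distrib, Finset.sum_const, smul_eq_mul, mul_one]
    rw [hUcard, hsum, ← hMcard]
    omega

end Aux

section Aux2

variable {V : Type*} [DecidableEq V] [Fintype V]

lemma selfSemiDisjoint_to_bouquets (E : Finset (Finset V)) (h2 : ∀ S ∈ E, S.card = 2)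
    (M : Finset (Finset V)) (hM : IsSelfSemiDisjointSet E M) :
    ∃ B : Finset (V × Finset V), IsStronglyDisjointBouquets E B ∧
      B.card = (unionEdges M).card - M.card := by
  obtain ⟨hME, hself, M₀, hM₀M, hM₀, hatt⟩ := hM
  rcases M.eq_empty_or_nonempty with rfl | ⟨S₁, hS₁⟩
  · refine ⟨∅, ⟨by simp, by simp, Prod.fst, by simp, ?_⟩, by simp [unionEdges]⟩
    simpa using inducedMatching_empty E h2
  have hcard : ∀ S ∈ M, S.card = 2 := fun S hS => h2 S (hME hS)
  have : Nonempty V := by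
    have := hcard S₁ hS₁
    obtain ⟨v, -⟩ := Finset.card_pos.mp (by omega : 0 < S₁.card)
    exact ⟨v⟩
  -- choose a private vertex p S for each S ∈ M
  have hpex : ∀ S ∈ M, ∃ v, v ∈ S ∧ v ∉ unionEdges (M.erase S) := by
    intro S hS
    obtain ⟨v, hv1, hv2⟩ := Finset.not_subset.mp (hself S hS)
    exact ⟨v, hv1, hv2⟩
  choose! p hp1 hp2 using hpex
  have hponly : ∀ S ∈ M, ∀ T ∈ M, p S ∈ T → T = S := by
    intro S hS T hT hpt
    by_contra hne'
    exact hp2 S hS (mem_unionEdges.mpr ⟨T, Finset.mem_erase.mpr ⟨hne', hT⟩, hpt⟩)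
  -- the other endpoint q S
  have hqex : ∀ S ∈ M, ∃ w, w ≠ p S ∧ S = {p S, w} := by
    intro S hS
    obtain ⟨a, b, hab, hSab⟩ := Finset.card_eq_two.mp (hcard S hS)
    subst hSab
    have hpS := hp1 _ hS
    rcases Finset.mem_insert.mp hpS with h | h
    · exact ⟨b, by rw [h]; exact hab.symm, by rw [h]⟩
    · rw [Finset.mem_singleton] at h
      exact ⟨a, by rw [h]; exact hab, by rw [h, Finset.pair_comm a b]⟩
  choose! q hq1 hq2 using hqex
  have hqmem : ∀ S ∈ M, q S ∈ S := by
    intro S hS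
    have h := hq2 S hS
    have hm : q S ∈ ({p S, q S} : Finset V) :=
      Finset.mem_insert_of_mem (Finset.mem_singleton_self _)
    rwa [← h] at hm
  have hvpq : ∀ S ∈ M, ∀ v ∈ S, v = p S ∨ v = q S := by
    intro S hS v hv
    rw [hq2 S hS] at hv
    rcases Finset.mem_insert.mp hv with h | h
    · exact Or.inl h
    · exact Or.inr (Finset.mem_singleton.mp h)
  have hpinj : ∀ S ∈ M, ∀ T ∈ M, p S = p T → S = T := by
    intro S hS T hT h
    have : p S ∈ T := by rw [h]; exact hp1 T hT
    exact (hponly S hS T hT this).symm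
  have hpnq : ∀ S ∈ M, ∀ T ∈ M, p S ≠ q T := by
    intro S hS T hT h
    have hpt : p S ∈ T := by rw [h]; exact hqmem T hT
    have hTS := hponly S hS T hT hpt
    rw [hTS] at h
    exact hq1 S hS h.symm
  -- cardinality of the union
  set Q : Finset V := M.image q with hQdef
  have hunion : unionEdges M = M.image p ∪ Q := by
    ext v
    rw [mem_unionEdges, Finset.mem_union]
    constructor
    · rintro ⟨S, hS, hv⟩
      rcases hvpq S hS v hv with h | h
      · exact Or.inl (Finset.mem_image.mpr ⟨S, hS, h.symm⟩)
      · exact Or.inr (Finset.mem_image.mpr ⟨S, hS, h.symm⟩)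
    · rintro (h | h)
      · obtain ⟨S, hS, rfl⟩ := Finset.mem_image.mp h
        exact ⟨S, hS, hp1 S hS⟩
      · obtain ⟨S, hS, rfl⟩ := Finset.mem_image.mp h
        exact ⟨S, hS, hqmem S hS⟩
  have hPQdisj : Disjoint (M.image p) Q := by
    rw [Finset.disjoint_left]
    rintro v hvP hvQ
    obtain ⟨S, hS, rfl⟩ := Finset.mem_image.mp hvP
    obtain ⟨T, hT, hqT⟩ := Finset.mem_image.mp hvQ
    exact hpnq S hS T hT hqT.symm
  have hcardU : (unionEdges M).card = M.card + Q.card := by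
    rw [hunion, Finset.card_union_of_disjoint hPQdisj,
      Finset.card_image_of_injOn (fun S hS T hT h => hpinj S hS T hT h)]
  -- every q-vertex is the q-vertex of an edge of M₀
  have hroot : ∀ S ∈ M, ∃ T ∈ M₀, q T = q S := by
    intro S hS
    by_cases hSM₀ : S ∈ M₀
    · exact ⟨S, hSM₀, rfl⟩
    obtain ⟨T, hTM₀, hcard1⟩ := hatt S hS hSM₀
    have hTne : T ≠ S := fun h => hSM₀ (h ▸ hTM₀)
    have hTM : T ∈ M := hM₀M hTM₀
    have hint : (S ∩ T).Nonempty := by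
      rw [← Finset.card_pos]
      have h3 := Finset.card_inter_add_card_sdiff S T
      have h4 := hcard S hS
      omega
    obtain ⟨v, hv⟩ := hint
    have hvS : v ∈ S := (Finset.mem_inter.mp hv).1
    have hvT : v ∈ T := (Finset.mem_inter.mp hv).2
    have hvq : v = q S := by
      rcases hvpq S hS v hvS with h | h
      · exact absurd (hponly S hS T hTM (h ▸ hvT)) hTne
      · exact h
    rcases hvpq T hTM v hvT with h | h
    · exact absurd (hponly T hTM S hS (h ▸ hvS)).symm hTne
    · exact ⟨T, hTM₀, by rw [← h, hvq]⟩
  have hTfex : ∀ w ∈ Q, ∃ T ∈ M₀, q T = w := by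
    intro w hw
    obtain ⟨S, hS, rfl⟩ := Finset.mem_image.mp hw
    exact hroot S hS
  choose! Tf hTf1 hTf2 using hTfex
  -- the bouquets
  set F : V → Finset V := fun w => (M.filter (fun S => q S = w)).image p with hFdef
  set B : Finset (V × Finset V) := Q.image (fun w => (w, F w)) with hBdef
  have hmemF : ∀ w y, y ∈ F w ↔ ∃ S ∈ M, q S = w ∧ p S = y := by
    intro w y
    simp [hFdef, Finset.mem_image, Finset.mem_filter, and_assoc]
  have hmemB : ∀ b, b ∈ B ↔ ∃ w ∈ Q, b = (w, F w) := by
    intro b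
    simp [hBdef, Finset.mem_image, eq_comm]
  have hQmem : ∀ w ∈ Q, ∃ S ∈ M, q S = w := by
    intro w hw
    obtain ⟨S, hS, rfl⟩ := Finset.mem_image.mp hw
    exact ⟨S, hS, rfl⟩
  refine ⟨B, ⟨?_, ?_, fun b => p (Tf b.1), ?_, ?_⟩, ?_⟩
  · -- each b ∈ B is a bouquet
    rintro b hb
    obtain ⟨w, hw, rfl⟩ := (hmemB b).mp hb
    obtain ⟨S₀, hS₀, hqS₀⟩ := hQmem w hw
    refine ⟨⟨p S₀, (hmemF w _).mpr ⟨S₀, hS₀, hqS₀, rfl⟩⟩, ?_, ?_⟩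
    · intro hwF
      obtain ⟨S, hS, hqS, hpS⟩ := (hmemF w w).mp hwF
      exact hpnq S hS S hS (hpS.trans hqS.symm)
    · intro y hy
      obtain ⟨S, hS, hqS, hpS⟩ := (hmemF w y).mp hy
      have : ({w, y} : Finset V) = S := by
        rw [← hqS, ← hpS, Finset.pair_comm, ← hq2 S hS]
      rw [this]
      exact hME hS
  · -- bouquets pairwise vertex-disjoint
    rintro b hb b' hb' hne'
    obtain ⟨w, hw, rfl⟩ := (hmemB b).mp hb
    obtain ⟨w', hw', rfl⟩ := (hmemB b').mp hb'
    have hww : w ≠ w' := fun h => hne' (by rw [h])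
    rw [Finset.disjoint_left]
    intro v hv hv'
    simp only [bouquetVerts] at hv hv'
    rcases Finset.mem_insert.mp hv with h1 | h1 <;>
      rcases Finset.mem_insert.mp hv' with h2 | h2
    · exact hww (h1.symm.trans h2)
    · -- v = w and v ∈ F w'
      obtain ⟨S, hS, hqS, hpS⟩ := (hmemF w' v).mp h2
      obtain ⟨S₀, hS₀, hqS₀⟩ := hQmem w hw
      exact hpnq S hS S₀ hS₀ (by rw [hpS, h1, ← hqS₀])
    · obtain ⟨S, hS, hqS, hpS⟩ := (hmemF w v).mp h1
      obtain ⟨S₀, hS₀, hqS₀⟩ := hQmem w' hw'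
      exact hpnq S hS S₀ hS₀ (by rw [hpS, h2, ← hqS₀])
    · obtain ⟨S, hS, hqS, hpS⟩ := (hmemF w v).mp h1
      obtain ⟨S', hS', hqS', hpS'⟩ := (hmemF w' v).mp h2
      have : S = S' := hpinj S hS S' hS' (hpS.trans hpS'.symm)
      exact hww (by rw [← hqS, this, hqS'])
  · -- the chosen stem is a flower
    rintro b hb
    obtain ⟨w, hw, rfl⟩ := (hmemB b).mp hb
    exact (hmemF w _).mpr ⟨Tf w, hM₀M (hTf1 w hw), hTf2 w hw, rfl⟩
  · -- the chosen stems form an induced matching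
    have hC : B.image (fun b => ({b.1, p (Tf b.1)} : Finset V)) = Q.image Tf := by
      rw [hBdef, Finset.image_image]
      refine Finset.image_congr ?_
      intro w hw
      rw [Finset.mem_coe] at hw
      have hTM : Tf w ∈ M := hM₀M (hTf1 w hw)
      show ({w, p (Tf w)} : Finset V) = Tf w
      have h := hq2 (Tf w) hTM
      rw [hTf2 w hw] at h
      rw [Finset.pair_comm w (p (Tf w))]
      exact h.symm
    rw [hC]
    have hCsub : Q.image Tf ⊆ M₀ := by
      intro S hS
      obtain ⟨w, hw, rfl⟩ := Finset.mem_image.mp hS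
      exact hTf1 w hw
    refine ⟨⟨hCsub.trans hM₀.1, ?_⟩, ?_⟩
    · -- semi-induced
      intro e he heC hesub
      have hesub' : e ⊆ unionEdges M₀ :=
        hesub.trans (unionEdges_mono hCsub)
      by_cases heM₀ : e ∈ M₀
      · have heM : e ∈ M := hM₀M heM₀
        have hpe : p e ∈ unionEdges (Q.image Tf) := hesub (hp1 e heM)
        obtain ⟨S', hS', hpeS'⟩ := mem_unionEdges.mp hpe
        have hS'M : S' ∈ M := hM₀M (hCsub hS')
        have : S' = e := hponly e heM S' hS'M hpeS'
        exact heC (this ▸ hS')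
      · exact hM₀.2 e he heM₀ hesub'
    · -- pairwise disjoint
      intro S hS T hT hST
      obtain ⟨w, hw, rfl⟩ := Finset.mem_image.mp hS
      obtain ⟨w', hw', rfl⟩ := Finset.mem_image.mp hT
      have hTwM : Tf w ∈ M := hM₀M (hTf1 w hw)
      have hTw'M : Tf w' ∈ M := hM₀M (hTf1 w' hw')
      rw [Finset.disjoint_left]
      intro v hv hv'
      rcases hvpq _ hTwM v hv with h | h
      · exact hST (hponly _ hTwM _ hTw'M (h ▸ hv')).symm
      · rcases hvpq _ hTw'M v hv' with h' | h'
        · exact hST (hponly _ hTw'M _ hTwM (h' ▸ hv))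
        · have e1 : w = v := (hTf2 w hw).symm.trans h.symm
          have e2 : w' = v := (hTf2 w' hw').symm.trans h'.symm
          exact hST (congrArg Tf (e1.trans e2.symm))
  · -- cardinality
    have hBcard : B.card = Q.card := by
      rw [hBdef]
      apply Finset.card_image_of_injective
      intro a b h
      exact congrArg Prod.fst h
    omega

end Aux2

/-- for a graph `G` with at least one edge,
`d'_{1,G} = d'_{2,G} = d'_G`: the maximum of `j - i` over self disjoint sets of
type `(i, j)`, the maximum of `j - i` over self semi-disjoint sets of type
`(i, j)`, and the maximum number of bouquets in a strongly disjoint set of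
bouquets, all coincide. -/
theorem d1'_eq_d2'_eq_dG'
    (E : Finset (Finset V)) (hH : IsSimpleHypergraph E)
    (h2 : ∀ S ∈ E, S.card = 2) (hne : E.Nonempty) :
    sSup {n : ℕ | ∃ M, IsSelfDisjointSet E M ∧ (unionEdges M).card - M.card = n} =
      sSup {n : ℕ | ∃ M, IsSelfSemiDisjointSet E M ∧ (unionEdges M).card - M.card = n} ∧
    sSup {n : ℕ | ∃ M, IsSelfDisjointSet E M ∧ (unionEdges M).card - M.card = n} =
      sSup {n : ℕ | ∃ B : Finset (V × Finset V),
        IsStronglyDisjointBouquets E B ∧ B.card = n} := by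
  have e12 : {n : ℕ | ∃ M, IsSelfDisjointSet E M ∧ (unionEdges M).card - M.card = n} ⊆
      {n : ℕ | ∃ M, IsSelfSemiDisjointSet E M ∧ (unionEdges M).card - M.card = n} := by
    rintro n ⟨M, ⟨hsub, hpriv, M₀, hM₀M, hIM, hatt⟩, hn⟩
    exact ⟨M, ⟨hsub, hpriv, M₀, hM₀M, hIM.1, hatt⟩, hn⟩
  have e23 : {n : ℕ | ∃ M, IsSelfSemiDisjointSet E M ∧ (unionEdges M).card - M.card = n} ⊆
      {n : ℕ | ∃ B : Finset (V × Finset V), IsStronglyDisjointBouquets E B ∧ B.card = n} := by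
    rintro n ⟨M, hM, rfl⟩
    obtain ⟨B, hB, hBc⟩ := selfSemiDisjoint_to_bouquets E h2 M hM
    exact ⟨B, hB, hBc⟩
  have e31 : {n : ℕ | ∃ B : Finset (V × Finset V), IsStronglyDisjointBouquets E B ∧ B.card = n} ⊆
      {n : ℕ | ∃ M, IsSelfDisjointSet E M ∧ (unionEdges M).card - M.card = n} := by
    rintro n ⟨B, hB, rfl⟩
    obtain ⟨M, hM, hMc⟩ := bouquets_to_selfDisjoint E B hB
    exact ⟨M, hM, hMc⟩
  have h12 := subset_antisymm e12 (e23.trans e31)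
  have h13 := subset_antisymm (e12.trans e23) e31
  exact ⟨congrArg sSup h12, congrArg sSup h13⟩
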